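/- Let 0 < p < α ≤ 1 and m ≥ 12. For every natural m_q with 2 ≤ m_q ≤ m/3: m·(m_q - 1)/m_q + 1 ≥ ⌈m_q·α + (m_q+1)·p⌉. That is, the minimal budget needed to saturate all isolated nodes in an optimal forest with smallest component of m_q edges meets or exceeds the budget needed to flip that component. -/
import Mathlib

/-- For `0 < p < α ≤ 1`, `m ≥ 12`, and `2 ≤ mq ≤ m/3`:
`m·(m_q-1)/m_q + 1 ≥ ⌈m_q·α + (m_q+1)·p⌉`. -/
theorem stmt19 (m mq : ℕ) (hm : 12 ≤ m) (hmq : 2 ≤ mq)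
    (hmq3 : (mq : ℝ) ≤ (m : ℝ) / 3) (α p : ℝ)
    (hp : 0 < p) (hpα : p < α) (hα : α ≤ 1) :
    (m : ℝ) * ((mq : ℝ) - 1) / (mq : ℝ) + 1
      ≥ ((⌈(mq : ℝ) * α + ((mq : ℝ) + 1) * p⌉ : ℤ) : ℝ) := by
  have hmqR : (2:ℝ) ≤ (mq:ℝ) := by exact_mod_cast hmq
  have hmq0 : (0:ℝ) < (mq:ℝ) := by linarith
  have hmR : (12:ℝ) ≤ (m:ℝ) := by exact_mod_cast hm
  have hceil : ((⌈(mq : ℝ) * α + ((mq : ℝ) + 1) * p⌉ : ℤ) : ℝ) ≤ 2*(mq:ℝ)+1 := by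
    have : (⌈(mq : ℝ) * α + ((mq : ℝ) + 1) * p⌉ : ℤ) ≤ 2*(mq:ℤ)+1 := by
      apply Int.ceil_le.mpr
      push_cast
      have hp1 : p ≤ 1 := by linarith
      nlinarith
    calc ((⌈(mq : ℝ) * α + ((mq : ℝ) + 1) * p⌉ : ℤ) : ℝ)
        ≤ ((2*(mq:ℤ)+1 : ℤ) : ℝ) := by exact_mod_cast this
      _ = 2*(mq:ℝ)+1 := by push_cast; ring
  have key : 2*(mq:ℝ)*(mq:ℝ) ≤ (m:ℝ)*((mq:ℝ)-1) := by
    rcases le_or_gt 3 mq with h3 | h3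
    · have h3R : (3:ℝ) ≤ (mq:ℝ) := by exact_mod_cast h3
      nlinarith
    · interval_cases mq
      push_cast
      nlinarith
  have : 2*(mq:ℝ) ≤ (m:ℝ)*((mq:ℝ)-1)/(mq:ℝ) := by
    rw [le_div_iff₀ hmq0]; nlinarith
  linarith
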